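/- For all integers 0 ≤ s ≤ N, the identity (2^s/s!) (1 − z²)^s U_N^{(s)}(z) = (−1)^s Σ_{j=0}^{s} (−1)^j C(N−j, N−s) C(N+s+1, j) U_{N+s−2j}(z) holds as an identity of polynomials. -/

import Mathlib

open Polynomial Finset

namespace Stmt10Aux

open Polynomial.Chebyshev

lemma U_deriv (n : ℤ) : (2 : ℚ[X]) * (1 - X ^ 2) * derivative (U ℚ n) =
    C ((n : ℚ) + 2) * U ℚ (n - 1) - C (n : ℚ) * U ℚ (n + 1) := by
  have h1 := add_one_mul_T_eq_poly_in_U (R := ℚ) n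
  have h2 := T_eq_U_sub_X_mul_U (R := ℚ) (n + 1)
  have h3 := U_add_one (R := ℚ) n
  have hC : (C ((n : ℤ) : ℚ) : ℚ[X]) = ((n : ℤ) : ℚ[X]) := by simp
  have hC2 : (C ((n : ℚ) + 2) : ℚ[X]) = ((n : ℤ) : ℚ[X]) + 2 := by
    rw [map_add, hC, map_ofNat]
  rw [show (n + 1 - 1 : ℤ) = n by ring] at h2
  rw [hC, hC2]
  linear_combination (norm := ring_nf) 2 * h1 - (2 * ((n : ℚ[X])) + 2) * h2 -
    ((n : ℚ[X]) + 2) * h3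

lemma term_op (σ : ℚ) (n : ℤ) :
    2 * (1 - X ^ 2) * derivative (U ℚ n) + C (4 * σ) * (X * U ℚ n) =
      C ((n : ℚ) + 2 + 2 * σ) * U ℚ (n - 1) + C (2 * σ - (n : ℚ)) * U ℚ (n + 1) := by
  have h := U_deriv n
  have h3 := U_add_one (R := ℚ) n
  simp only [map_add, map_sub, map_mul, map_ofNat, C_eq_intCast] at h ⊢
  linear_combination h - 2 * C σ * h3

lemma op_rec (s : ℕ) (p : ℚ[X]) :
    ((s : ℚ[X]) + 1) * (C ((2 : ℚ) ^ (s + 1) / (s + 1).factorial) * (1 - X ^ 2) ^ (s + 1) *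
        derivative p) =
      2 * (1 - X ^ 2) * derivative (C ((2 : ℚ) ^ s / s.factorial) * (1 - X ^ 2) ^ s * p) +
        4 * (s : ℚ[X]) * X * (C ((2 : ℚ) ^ s / s.factorial) * (1 - X ^ 2) ^ s * p) := by
  have hc : ((s : ℚ[X]) + 1) * C ((2 : ℚ) ^ (s + 1) / (s + 1).factorial) =
      2 * C ((2 : ℚ) ^ s / s.factorial) := by
    have h0 : ((s : ℚ) + 1) * ((2 : ℚ) ^ (s + 1) / (s + 1).factorial) =
        2 * ((2 : ℚ) ^ s / s.factorial) := by
      rw [Nat.factorial_succ]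
      have h1 : ((s.factorial : ℚ)) ≠ 0 := by exact_mod_cast s.factorial_ne_zero
      have h2 : ((s : ℚ) + 1) ≠ 0 := by positivity
      field_simp
      push_cast
      ring
    calc ((s : ℚ[X]) + 1) * C ((2 : ℚ) ^ (s + 1) / (s + 1).factorial)
        = C (((s : ℚ) + 1) * ((2 : ℚ) ^ (s + 1) / (s + 1).factorial)) := by
          rw [map_mul, map_add, C_eq_natCast, map_one]
      _ = C (2 * ((2 : ℚ) ^ s / s.factorial)) := by rw [h0]
      _ = 2 * C ((2 : ℚ) ^ s / s.factorial) := by rw [map_mul, map_ofNat]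
  have hcancel : (s : ℚ[X]) * ((1 - X ^ 2) * (1 - X ^ 2) ^ (s - 1)) =
      (s : ℚ[X]) * (1 - X ^ 2) ^ s := by
    cases s with
    | zero => simp
    | succ t =>
      congr 1
      rw [Nat.add_sub_cancel, ← pow_succ']
  have hd : derivative ((1 : ℚ[X]) - X ^ 2) = -(2 * X) := by
    simp [derivative_X_pow, map_ofNat]
    norm_num
  rw [derivative_mul, derivative_mul, derivative_C, derivative_pow, hd]
  simp only [C_eq_natCast]
  linear_combination (norm := ring_nf)
    ((1 - X ^ 2) ^ (s + 1) * derivative p) * hc +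
      (4 * X * C ((2 : ℚ) ^ s / s.factorial) * p) * hcancel

/-- The coefficient in the expansion. -/
def aa (N s j : ℕ) : ℚ :=
  (-1 : ℚ) ^ j * ((N - j).choose (N - s) : ℚ) * ((N + s + 1).choose j : ℚ)

lemma cI0 (N s : ℕ) (hs : s + 1 ≤ N) :
    aa N s 0 * (2 * (s : ℚ) - ((N : ℚ) + s - 2 * 0)) = -((s : ℚ) + 1) * aa N (s + 1) 0 := by
  have h := Nat.choose_succ_right_eq N (N - s - 1)
  have e1 : N - s - 1 + 1 = N - s := by omega
  have e2 : N - (N - s - 1) = s + 1 := by omega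
  have e3 : N - (s + 1) = N - s - 1 := by omega
  rw [e1, e2] at h
  have hq : (N.choose (N - s) : ℚ) * ((N : ℚ) - s) = (N.choose (N - s - 1) : ℚ) * ((s : ℚ) + 1) := by
    have := congrArg (fun x : ℕ => (x : ℚ)) h
    push_cast at this
    rw [Nat.cast_sub (by omega : s ≤ N)] at this
    linarith [this]
  simp only [aa, e3, Nat.sub_zero, pow_zero, Nat.choose_zero_right, Nat.cast_one]
  linear_combination -hq

lemma cItop (N s : ℕ) (hs : s + 1 ≤ N) :
    aa N s s * (((N : ℚ) + s - 2 * s) + 2 + 2 * s) = -((s : ℚ) + 1) * aa N (s + 1) (s + 1) := by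
  have h := Nat.add_one_mul_choose_eq (N + s + 1) s
  -- (N+s+2) * choose (N+s+1) s = choose (N+s+2) (s+1) * (s+1)
  have hq : ((N : ℚ) + s + 2) * ((N + s + 1).choose s : ℚ) =
      ((N + s + 2).choose (s + 1) : ℚ) * ((s : ℚ) + 1) := by
    have := congrArg (fun x : ℕ => (x : ℚ)) h
    push_cast [Nat.succ_eq_add_one] at this
    linear_combination this
  simp only [aa, Nat.choose_self, Nat.cast_one]
  rw [show N + (s + 1) + 1 = N + s + 2 by ring]
  linear_combination ((-1 : ℚ)) ^ s * hq

lemma cImid (N s j : ℕ) (hj : j < s) (hs : s + 1 ≤ N) :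
    aa N s j * (((N : ℚ) + s - 2 * j) + 2 + 2 * s) +
      aa N s (j + 1) * (2 * (s : ℚ) - ((N : ℚ) + s - 2 * (j + 1))) =
    -((s : ℚ) + 1) * aa N (s + 1) (j + 1) := by
  have hpq : ((N - (j + 1)).choose (N - s) : ℚ) * ((N : ℚ) - s) =
      ((N - (j + 1)).choose (N - s - 1) : ℚ) * ((s : ℚ) - j) := by
    have h := Nat.choose_succ_right_eq (N - (j + 1)) (N - s - 1)
    rw [show N - s - 1 + 1 = N - s by omega,
      show N - (j + 1) - (N - s - 1) = s - j by omega] at h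
    have h2 := congrArg (fun x : ℕ => (x : ℚ)) h
    simp only [Nat.cast_mul] at h2
    rw [Nat.cast_sub (by omega : s ≤ N), Nat.cast_sub (by omega : j ≤ s)] at h2
    exact h2
  have hrt : ((N + s + 1).choose (j + 1) : ℚ) * ((j : ℚ) + 1) =
      ((N + s + 1).choose j : ℚ) * ((N : ℚ) + s + 1 - j) := by
    have h := Nat.choose_succ_right_eq (N + s + 1) j
    have h2 := congrArg (fun x : ℕ => (x : ℚ)) h
    simp only [Nat.cast_mul] at h2
    rw [Nat.cast_sub (by omega : j ≤ N + s + 1)] at h2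
    push_cast at h2
    push_cast
    linear_combination h2
  have hP : ((N - j).choose (N - s) : ℚ) =
      ((N - (j + 1)).choose (N - s) : ℚ) + ((N - (j + 1)).choose (N - s - 1) : ℚ) := by
    rw [show N - j = (N - (j + 1)) + 1 by omega, show N - s = (N - s - 1) + 1 by omega,
      Nat.choose_succ_succ]
    simp only [Nat.succ_eq_add_one]
    rw [show N - s - 1 + 1 = N - s by omega]
    push_cast
    ring
  have hE : ((N + (s + 1) + 1).choose (j + 1) : ℚ) =
      ((N + s + 1).choose j : ℚ) + ((N + s + 1).choose (j + 1) : ℚ) := by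
    rw [show N + (s + 1) + 1 = (N + s + 1) + 1 by ring, Nat.choose_succ_succ]
    push_cast
    ring
  have hN0 : (N : ℚ) - s ≠ 0 := by
    have : (s : ℚ) < N := by exact_mod_cast (by omega : s < N)
    intro hc; linarith
  have hj0 : (j : ℚ) + 1 ≠ 0 := by positivity
  have hp' : ((N - (j + 1)).choose (N - s) : ℚ) =
      ((N - (j + 1)).choose (N - s - 1) : ℚ) * ((s : ℚ) - j) / ((N : ℚ) - s) := by
    field_simp
    linear_combination hpq
  have ht' : ((N + s + 1).choose (j + 1) : ℚ) =
      ((N + s + 1).choose j : ℚ) * ((N : ℚ) + s + 1 - j) / ((j : ℚ) + 1) := by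
    field_simp
    linear_combination hrt
  simp only [aa]
  rw [show N - (s + 1) = N - s - 1 by omega]
  rw [hP, hE, hp', ht']
  field_simp
  ring


lemma key_sum (N s : ℕ) (hs : s + 1 ≤ N) :
    2 * (1 - X ^ 2) *
        derivative (∑ j ∈ range (s + 1), C (aa N s j) * U ℚ ((N : ℤ) + s - 2 * j)) +
      C (4 * (s : ℚ)) *
        (X * ∑ j ∈ range (s + 1), C (aa N s j) * U ℚ ((N : ℤ) + s - 2 * j)) =
    ∑ k ∈ range (s + 2), C (-((s : ℚ) + 1) * aa N (s + 1) k) *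
      U ℚ ((N : ℤ) + (s + 1) - 2 * k) := by
  have e1 : 2 * (1 - X ^ 2) *
        derivative (∑ j ∈ range (s + 1), C (aa N s j) * U ℚ ((N : ℤ) + s - 2 * j)) +
      C (4 * (s : ℚ)) *
        (X * ∑ j ∈ range (s + 1), C (aa N s j) * U ℚ ((N : ℤ) + s - 2 * j)) =
      (∑ j ∈ range (s + 1), C (aa N s j * ((N : ℚ) + s - 2 * j + 2 + 2 * s)) *
          U ℚ ((N : ℤ) + (s + 1) - 2 * (j + 1))) +
      ∑ j ∈ range (s + 1), C (aa N s j * (2 * (s : ℚ) - ((N : ℚ) + s - 2 * j))) *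
          U ℚ ((N : ℤ) + (s + 1) - 2 * j) := by
    rw [derivative_sum]
    rw [mul_sum]
    rw [mul_sum]
    rw [mul_sum]
    rw [← Finset.sum_add_distrib]
    rw [← Finset.sum_add_distrib]
    refine sum_congr rfl fun j hj => ?_
    have ht := term_op (s : ℚ) ((N : ℤ) + s - 2 * j)
    have hcast : (((N : ℤ) + (s : ℕ) - 2 * (j : ℕ) : ℤ) : ℚ) = (N : ℚ) + s - 2 * j := by
      push_cast; ring
    rw [hcast] at ht
    rw [derivative_C_mul]
    rw [show (N : ℤ) + (s + 1) - 2 * ((j : ℤ) + 1) = (N : ℤ) + s - 2 * j - 1 by ring,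
      show (N : ℤ) + ((s : ℤ) + 1) - 2 * j = (N : ℤ) + s - 2 * j + 1 by ring]
    simp only [map_mul, map_add, map_sub, map_ofNat, C_eq_natCast] at ht ⊢
    linear_combination C (aa N s j) * ht
  rw [e1, sum_range_succ, sum_range_succ']
  conv_rhs => rw [sum_range_succ', sum_range_succ]
  have hmid : ∀ j ∈ range s,
      C (aa N s j * ((N : ℚ) + s - 2 * j + 2 + 2 * s)) *
          U ℚ ((N : ℤ) + (s + 1) - 2 * ((j : ℤ) + 1)) +
        C (aa N s (j + 1) * (2 * (s : ℚ) - ((N : ℚ) + s - 2 * ((j : ℕ) + 1 : ℕ)))) *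
          U ℚ ((N : ℤ) + (s + 1) - 2 * (((j : ℕ) + 1 : ℕ) : ℤ)) =
      C (-((s : ℚ) + 1) * aa N (s + 1) (j + 1)) *
          U ℚ ((N : ℤ) + (s + 1) - 2 * (((j : ℕ) + 1 : ℕ) : ℤ)) := by
    intro j hj
    have hj' : j < s := mem_range.mp hj
    rw [show (N : ℤ) + (s + 1) - 2 * ((j : ℤ) + 1) =
      (N : ℤ) + (s + 1) - 2 * (((j : ℕ) + 1 : ℕ) : ℤ) by push_cast; ring]
    rw [← add_mul, ← C_add]
    congr 2
    push_cast
    linear_combination cImid N s j hj' hs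
  have hmid' : (∑ x ∈ range s, C (aa N s x * ((N : ℚ) + s - 2 * x + 2 + 2 * s)) *
        U ℚ ((N : ℤ) + ((s : ℤ) + 1) - 2 * ((x : ℤ) + 1))) +
      ∑ k ∈ range s, C (aa N s (k + 1) * (2 * (s : ℚ) - ((N : ℚ) + s - 2 * ((k + 1 : ℕ) : ℚ)))) *
        U ℚ ((N : ℤ) + ((s : ℤ) + 1) - 2 * ((k + 1 : ℕ) : ℤ)) =
      ∑ x ∈ range s, C (-((s : ℚ) + 1) * aa N (s + 1) (x + 1)) *
        U ℚ ((N : ℤ) + ((s : ℤ) + 1) - 2 * ((x + 1 : ℕ) : ℤ)) := by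
    rw [← Finset.sum_add_distrib]
    exact sum_congr rfl hmid
  have htop : C (aa N s s * ((N : ℚ) + s - 2 * s + 2 + 2 * s)) *
        U ℚ ((N : ℤ) + ((s : ℤ) + 1) - 2 * ((s : ℤ) + 1)) =
      C (-((s : ℚ) + 1) * aa N (s + 1) (s + 1)) *
        U ℚ ((N : ℤ) + ((s : ℤ) + 1) - 2 * ((s + 1 : ℕ) : ℤ)) := by
    rw [show (N : ℤ) + ((s : ℤ) + 1) - 2 * ((s : ℤ) + 1) =
      (N : ℤ) + ((s : ℤ) + 1) - 2 * ((s + 1 : ℕ) : ℤ) by push_cast; ring]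
    exact congr_arg (· * _) (congrArg C (by linear_combination cItop N s hs))
  have h0 : C (aa N s 0 * (2 * (s : ℚ) - ((N : ℚ) + s - 2 * ((0 : ℕ) : ℚ)))) *
        U ℚ ((N : ℤ) + ((s : ℤ) + 1) - 2 * ((0 : ℕ) : ℤ)) =
      C (-((s : ℚ) + 1) * aa N (s + 1) 0) *
        U ℚ ((N : ℤ) + ((s : ℤ) + 1) - 2 * ((0 : ℕ) : ℤ)) := by
    exact congr_arg (· * _) (congrArg C (by push_cast; linear_combination cI0 N s hs))
  linear_combination hmid' + htop + h0


theorem stmt10' (N s : ℕ) (hs : s ≤ N) :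
    Polynomial.C ((2 ^ s : ℚ) / s.factorial) * (1 - Polynomial.X ^ 2) ^ s *
        Polynomial.derivative^[s] (Polynomial.Chebyshev.U ℚ N) =
      Polynomial.C ((-1 : ℚ) ^ s) *
        ∑ j ∈ Finset.range (s + 1),
          Polynomial.C ((-1 : ℚ) ^ j * ((N - j).choose (N - s) : ℚ) *
              ((N + s + 1).choose j : ℚ)) *
            Polynomial.Chebyshev.U ℚ ((N : ℤ) + s - 2 * j) := by
  induction s with
  | zero =>
    simp [Nat.choose_self]
  | succ s ih =>
    have hsN : s ≤ N := Nat.le_of_succ_le hs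
    have IH := ih hsN
    have hfold : (∑ j ∈ Finset.range (s + 1),
          Polynomial.C ((-1 : ℚ) ^ j * ((N - j).choose (N - s) : ℚ) *
              ((N + s + 1).choose j : ℚ)) *
            Polynomial.Chebyshev.U ℚ ((N : ℤ) + s - 2 * j)) =
        ∑ j ∈ Finset.range (s + 1), Polynomial.C (aa N s j) *
            Polynomial.Chebyshev.U ℚ ((N : ℤ) + s - 2 * j) := by
      simp only [aa]
    rw [hfold] at IH
    have h1 := op_rec s (Polynomial.derivative^[s] (Polynomial.Chebyshev.U ℚ N))
    rw [IH] at h1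
    have h2 := key_sum N s hs
    have hc : ((s : ℚ[X]) + 1) ≠ 0 := by
      have he : ((s : ℚ[X]) + 1) = Polynomial.C ((s : ℚ) + 1) := by simp
      rw [he, Ne, Polynomial.C_eq_zero]
      positivity
    have hsum : ((s : ℚ[X]) + 1) * (Polynomial.C ((-1 : ℚ) ^ (s + 1)) *
        ∑ j ∈ Finset.range (s + 1 + 1),
          Polynomial.C ((-1 : ℚ) ^ j * ((N - j).choose (N - (s + 1)) : ℚ) *
              ((N + (s + 1) + 1).choose j : ℚ)) *
            Polynomial.Chebyshev.U ℚ ((N : ℤ) + (s + 1 : ℕ) - 2 * j)) =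
        Polynomial.C ((-1 : ℚ) ^ s) *
        ∑ k ∈ Finset.range (s + 2), Polynomial.C (-((s : ℚ) + 1) * aa N (s + 1) k) *
          Polynomial.Chebyshev.U ℚ ((N : ℤ) + (s + 1) - 2 * k) := by
      rw [Finset.mul_sum, Finset.mul_sum, Finset.mul_sum]
      refine Finset.sum_congr rfl fun k hk => ?_
      rw [show ((N : ℤ) + (s + 1 : ℕ) - 2 * (k : ℤ)) = ((N : ℤ) + ((s : ℤ) + 1) - 2 * k) by
        push_cast; ring]
      simp only [aa, map_mul, map_pow, map_neg, map_one, map_add, Polynomial.C_eq_natCast]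
      ring
    apply mul_left_cancel₀ hc
    rw [Function.iterate_succ_apply', h1, hsum, ← h2, Polynomial.derivative_C_mul]
    simp only [map_mul, map_ofNat, Polynomial.C_eq_natCast]
    ring

end Stmt10Aux

open Stmt10Aux in
/-- `(2^s/s!)(1-z²)^s U_N^{(s)}(z)
  = (-1)^s ∑_{j=0}^s (-1)^j C(N-j,N-s) C(N+s+1,j) U_{N+s-2j}(z)`. -/
theorem stmt10 (N s : ℕ) (hs : s ≤ N) :
    Polynomial.C ((2 ^ s : ℚ) / s.factorial) * (1 - Polynomial.X ^ 2) ^ s *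
        Polynomial.derivative^[s] (Polynomial.Chebyshev.U ℚ N) =
      Polynomial.C ((-1 : ℚ) ^ s) *
        ∑ j ∈ Finset.range (s + 1),
          Polynomial.C ((-1 : ℚ) ^ j * ((N - j).choose (N - s) : ℚ) *
              ((N + s + 1).choose j : ℚ)) *
            Polynomial.Chebyshev.U ℚ ((N : ℤ) + s - 2 * j) :=
  stmt10' N s hs
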